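/- Let g : ℝ → ℝ be Borel measurable with |g(x)| ≤ C(1 + |x|^p) for some constants C > 0 and p ≥ 0, and define Φ(x) = ∫_ℝ g(xz) dγ(z), where γ is the standard Gaussian measure on ℝ. Then Φ is continuously differentiable on ℝ \ {0}; in particular, Φ′ is bounded on every bounded closed subset of ℝ not containing 0. -/

import Mathlib

open MeasureTheory ProbabilityTheory Real Set

/- ### Auxiliary integrability lemmas -/

set_option maxHeartbeats 1000000 in
lemma integrable_abs_rpow_mul_exp_neg_mul_sq {b : ℝ} (hb : 0 < b) {s : ℝ} (hs : 0 ≤ s) :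
    Integrable fun x : ℝ => |x| ^ s * Real.exp (-b * x ^ 2) := by
  have h : IntegrableOn (fun x : ℝ => |x| ^ s * Real.exp (-b * x ^ 2)) (Ioi 0) := by
    refine (integrableOn_rpow_mul_exp_neg_mul_sq hb (by linarith : (-1:ℝ) < s)).congr_fun
      (fun x hx => by rw [abs_of_pos hx]) measurableSet_Ioi
  rw [← integrableOn_univ, ← @Iio_union_Ici _ _ (0 : ℝ), integrableOn_union]
  constructor
  · rw [← Measure.map_neg_eq_self (volume : Measure ℝ)]
    have m : MeasurableEmbedding fun x : ℝ => -x := (Homeomorph.neg ℝ).measurableEmbedding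
    rw [m.integrableOn_map_iff]
    simp_rw [Function.comp_def, abs_neg, neg_sq, neg_preimage, neg_Iio, neg_zero]
    exact h
  · exact Iff.mpr integrableOn_Ici_iff_integrableOn_Ioi h

lemma integrable_poly_gauss {p c : ℝ} (hp : 0 ≤ p) (hc : 0 < c) :
    Integrable fun u : ℝ => (1 + |u| ^ p) * ((u ^ 2 + 1) * Real.exp (-c * u ^ 2)) := by
  have key : ∀ u : ℝ, |u| ^ (p + 2) = |u| ^ p * u ^ 2 := by
    intro u
    rcases eq_or_ne u 0 with h | h
    · simp [h, Real.zero_rpow (by positivity : p + 2 ≠ 0)]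
    · rw [Real.rpow_add (abs_pos.2 h), show ((2:ℝ)) = ((2:ℕ):ℝ) by norm_num,
        Real.rpow_natCast, sq_abs]
  have I1 := integrable_exp_neg_mul_sq hc
  have I2 : Integrable fun u : ℝ => u ^ 2 * Real.exp (-c * u ^ 2) := by
    have h2 := integrable_abs_rpow_mul_exp_neg_mul_sq hc (by norm_num : (0:ℝ) ≤ 2)
    refine h2.congr (Filter.Eventually.of_forall fun u => ?_)
    simp only
    rw [show ((2:ℝ)) = ((2:ℕ):ℝ) by norm_num, Real.rpow_natCast, sq_abs]
  have I3 := integrable_abs_rpow_mul_exp_neg_mul_sq hc hp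
  have I4 : Integrable fun u : ℝ => |u| ^ p * u ^ 2 * Real.exp (-c * u ^ 2) := by
    have h4 := integrable_abs_rpow_mul_exp_neg_mul_sq hc (by linarith : (0:ℝ) ≤ p + 2)
    refine h4.congr (Filter.Eventually.of_forall fun u => ?_)
    simp only
    rw [key]
  refine (((I1.add I2).add I3).add I4).congr (Filter.Eventually.of_forall fun u => ?_)
  simp only [Pi.add_apply]
  ring

/- ### The Gaussian kernel and its properties -/

noncomputable def kk (x u : ℝ) : ℝ :=
  (Real.sqrt (2 * π * x ^ 2))⁻¹ * Real.exp (-u ^ 2 / (2 * x ^ 2))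

lemma kk_nonneg (x u : ℝ) : 0 ≤ kk x u := by
  unfold kk; positivity

lemma sqrt_pos_of_ne {x : ℝ} (hx : x ≠ 0) : 0 < Real.sqrt (2 * π * x ^ 2) :=
  Real.sqrt_pos.2 (by positivity)

lemma measurable_kk (x : ℝ) : Measurable (kk x) := by
  unfold kk; fun_prop

lemma hasDerivAt_kk (u : ℝ) {x : ℝ} (hx : x ≠ 0) :
    HasDerivAt (fun y => kk y u) (kk x u * (u ^ 2 / x ^ 3 - 1 / x)) x := by
  have hx2 : (0:ℝ) < 2 * π * x ^ 2 := by positivity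
  have hs := sqrt_pos_of_ne hx
  have h1 : HasDerivAt (fun y : ℝ => 2 * π * y ^ 2) (2 * π * (2 * x ^ 1)) x :=
    (hasDerivAt_pow 2 x).const_mul (2 * π)
  have h2 : HasDerivAt (fun y : ℝ => Real.sqrt (2 * π * y ^ 2))
      (2 * π * (2 * x ^ 1) / (2 * Real.sqrt (2 * π * x ^ 2))) x :=
    h1.sqrt (ne_of_gt hx2)
  have h3 : HasDerivAt (fun y : ℝ => (Real.sqrt (2 * π * y ^ 2))⁻¹)
      (-(2 * π * (2 * x ^ 1) / (2 * Real.sqrt (2 * π * x ^ 2))) /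
        (Real.sqrt (2 * π * x ^ 2)) ^ 2) x :=
    h2.inv (ne_of_gt hs)
  have h4 : HasDerivAt (fun y : ℝ => 2 * y ^ 2) (2 * (2 * x ^ 1)) x :=
    (hasDerivAt_pow 2 x).const_mul 2
  have hden : (2 * x ^ 2 : ℝ) ≠ 0 := by positivity
  have h5 : HasDerivAt (fun y : ℝ => -u ^ 2 / (2 * y ^ 2))
      ((0 * (2 * x ^ 2) - (-u ^ 2) * (2 * (2 * x ^ 1))) / (2 * x ^ 2) ^ 2) x :=
    (hasDerivAt_const x (-u ^ 2)).div h4 hden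
  have h6 := h5.exp
  have h7 := h3.mul h6
  refine h7.congr_deriv ?_
  symm
  have hsq : (Real.sqrt (2 * π * x ^ 2)) ^ 2 = 2 * π * x ^ 2 := Real.sq_sqrt hx2.le
  unfold kk
  set s := Real.sqrt (2 * π * x ^ 2) with hsdef
  field_simp
  linear_combination (-2 * x^2) * hsq

lemma continuousAt_kkd (u : ℝ) {x₀ : ℝ} (hx₀ : x₀ ≠ 0) :
    ContinuousAt (fun x => kk x u * (u ^ 2 / x ^ 3 - 1 / x)) x₀ := by
  have hs := sqrt_pos_of_ne hx₀
  have hc1 : ContinuousAt (fun x : ℝ => (Real.sqrt (2 * π * x ^ 2))⁻¹) x₀ := by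
    refine ContinuousAt.inv₀ ?_ (ne_of_gt hs)
    exact (Real.continuous_sqrt.comp (by continuity)).continuousAt
  have hc2 : ContinuousAt (fun x : ℝ => Real.exp (-u ^ 2 / (2 * x ^ 2))) x₀ := by
    refine Real.continuous_exp.continuousAt.comp ?_
    exact continuousAt_const.div (by fun_prop) (by positivity)
  have hc3 : ContinuousAt (fun x : ℝ => u ^ 2 / x ^ 3 - 1 / x) x₀ := by
    refine ContinuousAt.sub ?_ ?_
    · exact continuousAt_const.div (by fun_prop) (pow_ne_zero 3 hx₀)
    · exact continuousAt_const.div continuousAt_id hx₀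
  exact (hc1.mul hc2).mul hc3

lemma kk_bound {a b x u : ℝ} (ha : 0 < a) (hax : a ≤ |x|) (hxb : |x| ≤ b) :
    kk x u ≤ (Real.sqrt (2 * π * a ^ 2))⁻¹ * Real.exp (-(1 / (2 * b ^ 2)) * u ^ 2) := by
  have hx : x ≠ 0 := by
    intro h; rw [h, abs_zero] at hax; linarith
  have hb : 0 < b := lt_of_lt_of_le ha (le_trans hax hxb)
  have hax2 : a ^ 2 ≤ x ^ 2 := by
    calc a ^ 2 ≤ |x| ^ 2 := pow_le_pow_left₀ ha.le hax 2
    _ = x ^ 2 := sq_abs x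
  have hxb2 : x ^ 2 ≤ b ^ 2 := by
    calc x ^ 2 = |x| ^ 2 := (sq_abs x).symm
    _ ≤ b ^ 2 := pow_le_pow_left₀ (abs_nonneg x) hxb 2
  have hx2 : (0:ℝ) < x ^ 2 := by positivity
  have h1 : (Real.sqrt (2 * π * x ^ 2))⁻¹ ≤ (Real.sqrt (2 * π * a ^ 2))⁻¹ := by
    gcongr
    all_goals first
      | exact Real.sqrt_pos.2 (by positivity)
      | exact Real.sqrt_le_sqrt (by nlinarith [pi_pos])
  have h2 : Real.exp (-u ^ 2 / (2 * x ^ 2)) ≤ Real.exp (-(1 / (2 * b ^ 2)) * u ^ 2) := by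
    apply Real.exp_le_exp.2
    have : (1 / (2 * b ^ 2)) * u ^ 2 ≤ u ^ 2 / (2 * x ^ 2) := by
      rw [div_mul_eq_mul_div, one_mul]
      gcongr
      all_goals first | exact sq_nonneg u | positivity | nlinarith
    linarith [this, (by ring : -u ^ 2 / (2 * x ^ 2) = -(u ^ 2 / (2 * x ^ 2)))]
  calc kk x u ≤ (Real.sqrt (2 * π * a ^ 2))⁻¹ * Real.exp (-u ^ 2 / (2 * x ^ 2)) := by
        unfold kk
        exact mul_le_mul_of_nonneg_right h1 (Real.exp_nonneg _)
    _ ≤ _ := mul_le_mul_of_nonneg_left h2 (by positivity)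

/- ### Representation of Φ via the Gaussian density -/

lemma repr_lemma (g : ℝ → ℝ) (hmeas : Measurable g) {x : ℝ} (hx : x ≠ 0) :
    ∫ z, g (x * z) ∂(gaussianReal 0 1) = ∫ u, kk x u * g u := by
  have hv : (NNReal.mk (x ^ 2) (sq_nonneg x) : NNReal) ≠ 0 := by
    intro h
    exact pow_ne_zero 2 hx (congrArg NNReal.toReal h)
  have hmap : (gaussianReal 0 1).map (fun z => x * z) =
      gaussianReal 0 (NNReal.mk (x ^ 2) (sq_nonneg x)) := by
    have := gaussianReal_map_const_mul (μ := 0) (v := 1) x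
    simpa using this
  have h1 : ∫ z, g (x * z) ∂(gaussianReal 0 1)
      = ∫ u, g u ∂(gaussianReal 0 (NNReal.mk (x ^ 2) (sq_nonneg x))) := by
    rw [← hmap, integral_map (measurable_const_mul x).aemeasurable
      hmeas.aestronglyMeasurable]
  rw [h1, gaussianReal_of_var_ne_zero _ hv]
  rw [show gaussianPDF 0 (NNReal.mk (x ^ 2) (sq_nonneg x) : NNReal)
      = fun u => ((Real.toNNReal (gaussianPDFReal 0 (NNReal.mk (x ^ 2) (sq_nonneg x)) u) : NNReal) : ENNReal)
      from rfl]
  rw [integral_withDensity_eq_integral_smul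
    ((measurable_gaussianPDFReal 0 _).real_toNNReal)]
  refine integral_congr_ae (Filter.Eventually.of_forall fun u => ?_)
  show (gaussianPDFReal 0 (NNReal.mk (x ^ 2) (sq_nonneg x)) u).toNNReal • g u = kk x u * g u
  rw [NNReal.smul_def, Real.coe_toNNReal _ (gaussianPDFReal_nonneg _ _ _)]
  simp only [gaussianPDFReal, kk, sub_zero, NNReal.coe_mk, smul_eq_mul]

/- ### Main local analysis -/

section Main

variable (g : ℝ → ℝ) (C p : ℝ)

/-- The partial derivative of the integrand. -/
noncomputable def FD (g : ℝ → ℝ) (x u : ℝ) : ℝ :=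
  kk x u * (u ^ 2 / x ^ 3 - 1 / x) * g u

lemma main_deriv (hmeas : Measurable g) (hC : 0 < C) (hp : 0 ≤ p)
    (hgrowth : ∀ x : ℝ, |g x| ≤ C * (1 + |x| ^ p)) {x₀ : ℝ} (hx₀ : x₀ ≠ 0) :
    HasDerivAt (fun x => ∫ u, kk x u * g u) (∫ u, FD g x₀ u) x₀ ∧
      ∃ bound : ℝ → ℝ, Integrable bound ∧
        ∀ᶠ x in nhds x₀, ∀ u : ℝ, ‖FD g x u‖ ≤ bound u := by
  set a : ℝ := |x₀| / 2 with ha_def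
  set b : ℝ := |x₀| + |x₀| / 2 with hb_def
  have hx₀' : 0 < |x₀| := abs_pos.2 hx₀
  have ha : 0 < a := by positivity
  have hb : 0 < b := by positivity
  have hcb : (0:ℝ) < 1 / (2 * b ^ 2) := by positivity
  set ε : ℝ := |x₀| / 2 with hε_def
  have hε : 0 < ε := by positivity
  have hmem : ∀ x ∈ Metric.ball x₀ ε, a ≤ |x| ∧ |x| ≤ b := by
    intro x hx
    rw [Metric.mem_ball, Real.dist_eq] at hx
    have h1 := abs_sub_abs_le_abs_sub x x₀
    have h2 := abs_sub_abs_le_abs_sub x₀ x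
    rw [abs_sub_comm x₀ x] at h2
    constructor <;> [skip; skip] <;> simp only [ha_def, hb_def] <;> linarith
  -- the bound
  set M0 : ℝ := C * (Real.sqrt (2 * π * a ^ 2))⁻¹ * (1 / a ^ 3 + 1 / a) with hM0_def
  have hM0 : 0 < M0 := by positivity
  set bound : ℝ → ℝ := fun u =>
    M0 * ((1 + |u| ^ p) * ((u ^ 2 + 1) * Real.exp (-(1 / (2 * b ^ 2)) * u ^ 2))) with hbound_def
  have bound_int : Integrable bound := (integrable_poly_gauss hp hcb).const_mul M0
  have key_bound : ∀ u : ℝ, ∀ x ∈ Metric.ball x₀ ε, ‖FD g x u‖ ≤ bound u := by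
    intro u x hx
    obtain ⟨hax, hxb⟩ := hmem x hx
    have hxne : x ≠ 0 := by
      intro h; rw [h, abs_zero] at hax; linarith
    have hA : (0:ℝ) < (Real.sqrt (2 * π * a ^ 2))⁻¹ := by
      have := sqrt_pos_of_ne (ne_of_gt ha)
      positivity
    have hE : (0:ℝ) < Real.exp (-(1 / (2 * b ^ 2)) * u ^ 2) := Real.exp_pos _
    set A : ℝ := (Real.sqrt (2 * π * a ^ 2))⁻¹
    set E : ℝ := Real.exp (-(1 / (2 * b ^ 2)) * u ^ 2)
    have hkk : kk x u ≤ A * E := kk_bound ha hax hxb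
    have hdiff : |u ^ 2 / x ^ 3 - 1 / x| ≤ u ^ 2 / a ^ 3 + 1 / a := by
      have habs3 : a ^ 3 ≤ |x| ^ 3 := pow_le_pow_left₀ ha.le hax 3
      have h3 : |u ^ 2 / x ^ 3| ≤ u ^ 2 / a ^ 3 := by
        rw [abs_div, abs_pow, abs_pow, sq_abs]
        gcongr
        all_goals first | exact sq_nonneg u | positivity | exact habs3
      have h4 : |1 / x| ≤ 1 / a := by
        rw [abs_div, abs_one]
        gcongr
        all_goals first | positivity | exact hax
      calc |u ^ 2 / x ^ 3 - 1 / x| ≤ |u ^ 2 / x ^ 3| + |1 / x| := abs_sub _ _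
        _ ≤ u ^ 2 / a ^ 3 + 1 / a := add_le_add h3 h4
    have hg := hgrowth u
    have hXnn : (0:ℝ) ≤ 1 + |u| ^ p := by positivity
    calc ‖FD g x u‖ = kk x u * |u ^ 2 / x ^ 3 - 1 / x| * |g u| := by
          rw [Real.norm_eq_abs]
          unfold FD
          rw [abs_mul, abs_mul, abs_of_nonneg (kk_nonneg _ _)]
      _ ≤ (A * E) * (u ^ 2 / a ^ 3 + 1 / a) * (C * (1 + |u| ^ p)) := by
          refine mul_le_mul (mul_le_mul hkk hdiff (abs_nonneg _) (by positivity)) hg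
            (abs_nonneg _) ?_
          positivity
      _ ≤ (A * E) * ((1 / a ^ 3 + 1 / a) * (u ^ 2 + 1)) * (C * (1 + |u| ^ p)) := by
          have hin : u ^ 2 / a ^ 3 + 1 / a ≤ (1 / a ^ 3 + 1 / a) * (u ^ 2 + 1) := by
            have hpos : (0:ℝ) ≤ u ^ 2 / a + 1 / a ^ 3 := by positivity
            have hexp : (1 / a ^ 3 + 1 / a) * (u ^ 2 + 1)
                = u ^ 2 / a ^ 3 + 1 / a + (u ^ 2 / a + 1 / a ^ 3) := by ring
            linarith
          refine mul_le_mul_of_nonneg_right (mul_le_mul_of_nonneg_left hin (by positivity)) ?_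
          positivity
      _ = bound u := by
          simp only [hbound_def, hM0_def]
          ring
  have hF_meas : ∀ x : ℝ, AEStronglyMeasurable (fun u => kk x u * g u) volume :=
    fun x => ((measurable_kk x).mul hmeas).aestronglyMeasurable
  have hFD_meas : ∀ x : ℝ, AEStronglyMeasurable (FD g x) volume := by
    intro x
    refine (((measurable_kk x).mul ?_).mul hmeas).aestronglyMeasurable
    fun_prop
  have hx₀mem : x₀ ∈ Metric.ball x₀ ε := Metric.mem_ball_self hε
  obtain ⟨hax₀, hxb₀⟩ := hmem x₀ hx₀mem
  have hF_int : Integrable (fun u => kk x₀ u * g u) := by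
    refine Integrable.mono' ((integrable_poly_gauss hp hcb).const_mul
      (C * (Real.sqrt (2 * π * a ^ 2))⁻¹)) (hF_meas x₀)
      (Filter.Eventually.of_forall fun u => ?_)
    have hA : (0:ℝ) < (Real.sqrt (2 * π * a ^ 2))⁻¹ := by
      have := sqrt_pos_of_ne (ne_of_gt ha)
      positivity
    have hE : (0:ℝ) < Real.exp (-(1 / (2 * b ^ 2)) * u ^ 2) := Real.exp_pos _
    set A : ℝ := (Real.sqrt (2 * π * a ^ 2))⁻¹
    set E : ℝ := Real.exp (-(1 / (2 * b ^ 2)) * u ^ 2)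
    have hXnn : (0:ℝ) ≤ 1 + |u| ^ p := by positivity
    have step : (1 + |u| ^ p) * E ≤ (1 + |u| ^ p) * ((u ^ 2 + 1) * E) :=
      mul_le_mul_of_nonneg_left (le_mul_of_one_le_left hE.le (by nlinarith [sq_nonneg u])) hXnn
    calc ‖kk x₀ u * g u‖ = kk x₀ u * |g u| := by
          rw [Real.norm_eq_abs, abs_mul, abs_of_nonneg (kk_nonneg _ _)]
      _ ≤ (A * E) * (C * (1 + |u| ^ p)) :=
          mul_le_mul (kk_bound ha hax₀ hxb₀) (hgrowth u) (abs_nonneg _) (by positivity)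
      _ = (C * A) * ((1 + |u| ^ p) * E) := by ring
      _ ≤ (C * A) * ((1 + |u| ^ p) * ((u ^ 2 + 1) * E)) :=
          mul_le_mul_of_nonneg_left step (by positivity)
  have hderiv := hasDerivAt_integral_of_dominated_loc_of_deriv_le (Metric.ball_mem_nhds x₀ hε)
    (Filter.Eventually.of_forall hF_meas) hF_int (hFD_meas x₀)
    (Filter.Eventually.of_forall fun u => fun x hx => key_bound u x hx)
    bound_int
    (Filter.Eventually.of_forall fun u => fun x hx => by
      have hxne : x ≠ 0 := by
        intro h
        have := (hmem x hx).1
        rw [h, abs_zero] at this; linarith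
      exact (hasDerivAt_kk u hxne).mul_const (g u))
  refine ⟨hderiv.2, bound, bound_int, ?_⟩
  exact Filter.eventually_of_mem (Metric.ball_mem_nhds x₀ hε)
    (fun x hx u => key_bound u x hx)

end Main

/-- for `g` Borel measurable of at most polynomial growth and
`Φ(x) = ∫ g(xz) dγ(z)` (γ the standard Gaussian measure), `Φ` is continuously differentiable
on `ℝ \ {0}`; in particular `Φ′` is bounded on every bounded closed set not containing `0`. -/
theorem stmt_11 (g : ℝ → ℝ) (hmeas : Measurable g)
    (C p : ℝ) (hC : 0 < C) (hp : 0 ≤ p)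
    (hgrowth : ∀ x : ℝ, |g x| ≤ C * (1 + |x| ^ p))
    (Φ : ℝ → ℝ) (hΦ : ∀ x : ℝ, Φ x = ∫ z, g (x * z) ∂(gaussianReal 0 1)) :
    ContDiffOn ℝ 1 Φ {(0 : ℝ)}ᶜ ∧
      ∀ K : Set ℝ, Bornology.IsBounded K → IsClosed K → (0 : ℝ) ∉ K →
        ∃ M : ℝ, ∀ x ∈ K, |deriv Φ x| ≤ M := by
  set D : ℝ → ℝ := fun x => ∫ u, FD g x u with hD_def
  have hHas : ∀ x : ℝ, x ≠ 0 → HasDerivAt Φ (D x) x := by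
    intro x hx
    have h := (main_deriv g C p hmeas hC hp hgrowth hx).1
    refine h.congr_of_eventuallyEq ?_
    filter_upwards [isOpen_compl_singleton.mem_nhds
      (Set.mem_compl_singleton_iff.mpr hx)] with y hy
    exact (hΦ y).trans (repr_lemma g hmeas hy)
  have hderivΦ : ∀ x : ℝ, x ≠ 0 → deriv Φ x = D x := fun x hx => (hHas x hx).deriv
  have hFD_meas : ∀ x : ℝ, AEStronglyMeasurable (FD g x) volume := by
    intro x
    refine (((measurable_kk x).mul ?_).mul hmeas).aestronglyMeasurable
    fun_prop
  have hcontD : ∀ x₀ : ℝ, x₀ ≠ 0 → ContinuousAt D x₀ := by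
    intro x₀ hx₀
    obtain ⟨bound, bint, hev⟩ := (main_deriv g C p hmeas hC hp hgrowth hx₀).2
    refine continuousAt_of_dominated (Filter.Eventually.of_forall hFD_meas) ?_ bint ?_
    · exact hev.mono fun x hx => ae_of_all _ hx
    · exact ae_of_all _ fun u => (continuousAt_kkd u hx₀).mul continuousAt_const
  have hcontderiv : ContinuousOn (deriv Φ) {(0 : ℝ)}ᶜ := by
    intro x hx
    apply ContinuousAt.continuousWithinAt
    refine (hcontD x hx).congr ?_
    filter_upwards [isOpen_compl_singleton.mem_nhds hx] with y hy
    exact (hderivΦ y hy).symm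
  have hdiff : DifferentiableOn ℝ Φ {(0 : ℝ)}ᶜ := fun x hx =>
    ((hHas x hx).differentiableAt).differentiableWithinAt
  constructor
  · rw [show (1 : WithTop ℕ∞) = 0 + 1 by norm_num,
      contDiffOn_succ_iff_deriv_of_isOpen isOpen_compl_singleton]
    refine ⟨hdiff, ?_, contDiffOn_zero.mpr hcontderiv⟩
    intro h
    exact absurd h (by simp)
  · intro K hKb hKc hK0
    have hKcomp : IsCompact K := Metric.isCompact_of_isClosed_isBounded hKc hKb
    have hsub : K ⊆ {(0 : ℝ)}ᶜ := fun x hx h => hK0 (h ▸ hx)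
    obtain ⟨M, hM⟩ := hKcomp.exists_bound_of_continuousOn (hcontderiv.mono hsub)
    exact ⟨M, fun x hx => by simpa [Real.norm_eq_abs] using hM x hx⟩
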